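/- arXiv:1406.1914 — 3 statements merged into one kernel-verified Lean document; each statement's English description precedes it below -/
import Mathlib

section
/- Let Q be a simple (n+1)-polytope with pairwise disjoint facets Q₁, …, Q_k whose vertices exhaust all vertices of Q, and let λ be an isotropy function on the remaining facets F₁,…,F_m of Q. Extend λ to a function η on all facets of Q by η(F_i) = (λ(F_i), 0) ∈ ℤⁿ × {0} ⊆ ℤ^{n+1} and η(Q_j) = (0,…,0,1) ∈ ℤ^{n+1}. Then η is a di-characteristic function on Q. -/
open Set

variable {V : Type*} [AddCommGroup V] [Module ℝ V]

/-- A (convex) polytope: the convex hull of a finite set of points. -/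
def IsPolytope (P : Set V) : Prop := ∃ s : Finset V, P = convexHull ℝ (↑s : Set V)

/-- The dimension of a subset of a real vector space: the dimension of its
direction (the vector span of differences of its points). -/
noncomputable def pdim (S : Set V) : ℕ := Module.finrank ℝ (vectorSpan ℝ S)

/-- `F` is a face of the polytope `P`: either `F = P` or `F` is the intersection of `P`
with a supporting hyperplane. -/
def IsFace (P F : Set V) : Prop :=
  F = P ∨ ∃ (f : V →ₗ[ℝ] ℝ) (c : ℝ), (∀ x ∈ P, f x ≤ c) ∧ F = {x ∈ P | f x = c}

/-- A facet is a nonempty face of codimension one. -/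
def IsFacet (P F : Set V) : Prop := IsFace P F ∧ F.Nonempty ∧ pdim F + 1 = pdim P

/-- A vertex is a point whose singleton is a face. -/
def IsVertex (P : Set V) (v : V) : Prop := IsFace P {v}

/-- An edge is a nonempty one-dimensional face. -/
def IsEdge (P e : Set V) : Prop := IsFace P e ∧ e.Nonempty ∧ pdim e = 1

/-- A polytope is simple if every vertex lies on exactly `dim P` facets. -/
def IsSimple (P : Set V) : Prop :=
  ∀ v, IsVertex P v → {F | IsFacet P F ∧ v ∈ F}.ncard = pdim P

/-- A di-characteristic function on a simple polytope `P`: it assigns to each facet a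
vector in `ℤ^d`, such that the vectors assigned to any collection of facets with
nonempty common intersection are linearly independent over `ℤ`. -/
def IsDiChar {V : Type*} [AddCommGroup V] [Module ℝ V] {d : ℕ}
    (P : Set V) (ξ : Set V → (Fin d → ℤ)) : Prop :=
  ∀ G : Set (Set V), (∀ A ∈ G, IsFacet P A) → (⋂₀ G).Nonempty →
    LinearIndependent ℤ (fun A : G => ξ (A : Set V))

/-- Let `Q` be a simple `(n+1)`-polytope with pairwise disjoint facets `Q₁, …, Q_k`
whose vertices exhaust all vertices of `Q`, and let `λ` be an isotropy function on the
remaining facets `F₁, …, F_m` of `Q`.  Extend `λ` to a function `η` on all facets of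
`Q` by `η(Fᵢ) = (λ(Fᵢ), 0)` and `η(Q_j) = (0, …, 0, 1)`.  Then `η` is a
di-characteristic function on `Q`. -/
theorem extension_of_isotropy_is_diChar
    {n k m : ℕ} (Q : Set (Fin (n + 1) → ℝ)) (hQ : IsPolytope Q)
    (hdim : pdim Q = n + 1) (hsimple : IsSimple Q)
    (Qe : Fin k → Set (Fin (n + 1) → ℝ)) (F : Fin m → Set (Fin (n + 1) → ℝ))
    (hQe : ∀ j, IsFacet Q (Qe j)) (hF : ∀ i, IsFacet Q (F i))
    (hdisj : ∀ j j', j ≠ j' → Qe j ∩ Qe j' = ∅)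
    (hvert : ∀ v, IsVertex Q v → ∃ j, v ∈ Qe j)
    (hall : {G | IsFacet Q G} = Set.range Qe ∪ Set.range F)
    (lam : Fin m → (Fin n → ℤ))
    (hlam : ∀ I : Set (Fin m), (⋂ i ∈ I, F i).Nonempty →
      LinearIndependent ℤ (fun i : I => lam i))
    (η : Set (Fin (n + 1) → ℝ) → (Fin (n + 1) → ℤ))
    (hη₁ : ∀ i, η (F i) = Fin.snoc (lam i) 0)
    (hη₂ : ∀ j, η (Qe j) = Pi.single (Fin.last n) 1) :
    IsDiChar Q η := by
  intro G hG hne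
  obtain ⟨x, hx⟩ := hne
  classical
  -- the set of F-indices whose facet belongs to G
  set I : Set (Fin m) := {i | F i ∈ G} with hI
  have hxI : (⋂ i ∈ I, F i).Nonempty := by
    refine ⟨x, ?_⟩
    simp only [Set.mem_iInter]
    intro i hi
    exact hx _ hi
  have hlamI := hlam I hxI
  -- the linear embedding v ↦ snoc v 0
  let E : (Fin n → ℤ) →ₗ[ℤ] (Fin (n + 1) → ℤ) :=
    { toFun := fun v => Fin.snoc v 0
      map_add' := by
        intro a b
        funext p
        by_cases h : (p : ℕ) < n <;> simp [Fin.snoc, h]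
      map_smul' := by
        intro c a
        funext p
        by_cases h : (p : ℕ) < n <;> simp [Fin.snoc, h] }
  have hEker : LinearMap.ker E = ⊥ := by
    rw [LinearMap.ker_eq_bot]
    intro a b hab
    have := congrArg (Fin.init) hab
    simpa [E, Fin.init_snoc] using this
  -- evaluation at the last coordinate
  let φ : (Fin (n + 1) → ℤ) →ₗ[ℤ] ℤ := LinearMap.proj (Fin.last n)
  have hv : LinearIndependent ℤ (fun i : I => E (lam i)) := hlamI.map' E hEker
  have hw : LinearIndependent ℤ (fun _ : Unit => (Pi.single (Fin.last n) 1 : Fin (n+1) → ℤ)) := by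
    refine linearIndependent_unique_iff.mpr ?_
    intro h
    have := congrFun h (Fin.last n)
    simp at this
  have hspanv : Submodule.span ℤ (Set.range fun i : I => E (lam i)) ≤ LinearMap.ker φ := by
    rw [Submodule.span_le]
    rintro _ ⟨i, rfl⟩
    simp [E, φ, Fin.snoc_last]
  have hdisj' : Disjoint (Submodule.span ℤ (Set.range fun i : I => E (lam i)))
      (Submodule.span ℤ (Set.range fun _ : Unit => (Pi.single (Fin.last n) 1 : Fin (n+1) → ℤ))) := by
    rw [Submodule.disjoint_def]
    intro u hu hu'
    rw [Set.range_const, Submodule.mem_span_singleton] at hu'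
    obtain ⟨c, rfl⟩ := hu'
    have h0 : φ (c • (Pi.single (Fin.last n) 1 : Fin (n+1) → ℤ)) = 0 := hspanv hu
    simp [φ] at h0
    simp [h0]
  have hsum : LinearIndependent ℤ
      (Sum.elim (fun i : I => E (lam i))
        (fun _ : Unit => (Pi.single (Fin.last n) 1 : Fin (n+1) → ℤ))) :=
    hv.sum_type hw hdisj'
  -- the classification map
  have hmem : ∀ A : G, (A : Set (Fin (n+1) → ℝ)) ∈ Set.range Qe ∪ Set.range F := by
    intro A
    rw [← hall]
    exact hG _ A.2
  let ψ : G → (I ⊕ Unit) := fun A =>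
    if h : ∃ i : Fin m, F i = (A : Set (Fin (n+1) → ℝ)) then
      Sum.inl ⟨h.choose, by
        have := h.choose_spec
        simp only [hI, Set.mem_setOf_eq, this]
        exact A.2⟩
    else Sum.inr ()
  have hψQe : ∀ A : G, (¬ ∃ i : Fin m, F i = (A : Set (Fin (n+1) → ℝ))) →
      ∃ j, Qe j = (A : Set (Fin (n+1) → ℝ)) := by
    intro A h
    rcases hmem A with hA | hA
    · exact hA
    · exact absurd hA h
  have hψinj : Function.Injective ψ := by
    intro A B hAB
    by_cases hA : ∃ i : Fin m, F i = (A : Set (Fin (n+1) → ℝ)) <;>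
      by_cases hB : ∃ i : Fin m, F i = (B : Set (Fin (n+1) → ℝ))
    · simp only [ψ, dif_pos hA, dif_pos hB, Sum.inl.injEq, Subtype.mk.injEq] at hAB
      apply Subtype.ext
      rw [← hA.choose_spec, ← hB.choose_spec, hAB]
    · simp only [ψ, dif_pos hA, dif_neg hB] at hAB
      cases hAB
    · simp only [ψ, dif_neg hA, dif_pos hB] at hAB
      cases hAB
    · obtain ⟨j, hj⟩ := hψQe A hA
      obtain ⟨j', hj'⟩ := hψQe B hB
      rcases eq_or_ne j j' with rfl | hne
      · exact Subtype.ext (by rw [← hj, ← hj'])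
      · have hxA : x ∈ Qe j := hj ▸ hx _ A.2
        have hxB : x ∈ Qe j' := hj' ▸ hx _ B.2
        have := hdisj j j' hne
        exact absurd (Set.mem_inter hxA hxB) (by rw [this]; exact Set.notMem_empty x)
  have hcomp : (fun A : G => η (A : Set (Fin (n+1) → ℝ))) =
      (Sum.elim (fun i : I => E (lam i))
        (fun _ : Unit => (Pi.single (Fin.last n) 1 : Fin (n+1) → ℤ))) ∘ ψ := by
    funext A
    by_cases h : ∃ i : Fin m, F i = (A : Set (Fin (n+1) → ℝ))
    · simp only [Function.comp_apply, ψ, dif_pos h, Sum.elim_inl]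
      calc η (A : Set (Fin (n+1) → ℝ)) = η (F h.choose) := by rw [h.choose_spec]
        _ = E (lam h.choose) := by rw [hη₁]; rfl
    · obtain ⟨j, hj⟩ := hψQe A h
      simp only [Function.comp_apply, ψ, dif_neg h, Sum.elim_inr]
      rw [← hj, hη₂]
  rw [hcomp]
  exact hsum.comp ψ hψinj
end

section
/- Let Q be a simple (n+1)-polytope whose exceptional facets Q₁, …, Q_k are pairwise disjoint and contain all vertices of Q, i.e., V(Q) = ⋃ V(Q_j). Then Q = ⋃_{j=1}^k U(Q_j), where U(Q_j) = Q \ C(Q_j) and C(Q_j) is the union of all faces of Q disjoint from Q_j. -/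
open Set

variable {V : Type*} [AddCommGroup V] [Module ℝ V]

private lemma hull_le' {f : V →ₗ[ℝ] ℝ} {c : ℝ} {s : Finset V}
    (h : ∀ p ∈ s, f p ≤ c) : ∀ x ∈ convexHull ℝ (↑s : Set V), f x ≤ c := by
  intro x hx
  have : convexHull ℝ (↑s : Set V) ⊆ {x | f x ≤ c} :=
    convexHull_min (fun p hp => h p hp) (convex_halfSpace_le f.isLinear c)
  exact this hx

private lemma mem_hull_filter' {f : V →ₗ[ℝ] ℝ} {c : ℝ} {s : Finset V}
    (h : ∀ p ∈ s, f p ≤ c) {x : V} (hx : x ∈ convexHull ℝ (↑s : Set V)) (hfx : f x = c) :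
    x ∈ convexHull ℝ (↑(s.filter (fun p => f p = c)) : Set V) := by
  classical
  rw [Finset.convexHull_eq] at hx
  obtain ⟨w, hw0, hw1, hxw⟩ := hx
  have hxs : x = ∑ y ∈ s, w y • y := by
    rw [← hxw, Finset.centerMass_eq_of_sum_1 _ _ hw1]; simp
  have hfs : ∑ y ∈ s, w y * f y = c := by
    have : f x = ∑ y ∈ s, w y * f y := by
      rw [hxs, map_sum]; simp [smul_eq_mul]
    rw [← this, hfx]
  have hzero : ∀ y ∈ s, y ∉ s.filter (fun p => f p = c) → w y = 0 := by
    intro y hy hyf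
    simp only [Finset.mem_filter, hy, true_and] at hyf
    by_contra hw
    have hwpos : 0 < w y := lt_of_le_of_ne (hw0 y hy) (Ne.symm hw)
    have hlt : ∑ y ∈ s, w y * f y < ∑ y ∈ s, w y * c := by
      refine Finset.sum_lt_sum (fun i hi => mul_le_mul_of_nonneg_left (h i hi) (hw0 i hi)) ?_
      exact ⟨y, hy, by
        exact mul_lt_mul_of_pos_left (lt_of_le_of_ne (h y hy) hyf) hwpos⟩
    rw [hfs, ← Finset.sum_mul, hw1, one_mul] at hlt
    exact lt_irrefl c hlt
  have hsum' : ∑ y ∈ s.filter (fun p => f p = c), w y = 1 := by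
    rw [← hw1]
    exact Finset.sum_subset (Finset.filter_subset _ _) hzero
  have hcm : (s.filter (fun p => f p = c)).centerMass w id = x := by
    rw [Finset.centerMass_subset id (Finset.filter_subset _ _) hzero, hxw]
  rw [← hcm]
  exact Finset.centerMass_id_mem_convexHull _ (fun i hi => hw0 i (Finset.mem_filter.mp hi).1)
    (by rw [hsum']; norm_num)

private lemma  exists_injOn_linear' {m : ℕ} (s : Finset (Fin m → ℝ)) :
    ∃ g : (Fin m → ℝ) →ₗ[ℝ] ℝ, Set.InjOn g ↑s := by
  classical
  let T : Finset (Subspace ℝ ((Fin m → ℝ) →ₗ[ℝ] ℝ)) :=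
    ((s ×ˢ s).filter (fun pq => pq.1 ≠ pq.2)).image
      (fun pq => LinearMap.ker (LinearMap.applyₗ (pq.1 - pq.2)))
  have htop : ⊤ ∉ T := by
    simp only [T, Finset.mem_image, Finset.mem_filter]
    rintro ⟨⟨p, q⟩, ⟨hpq, hne⟩, hker⟩
    have hv : p - q ≠ 0 := sub_ne_zero.mpr hne
    obtain ⟨i, hi⟩ : ∃ i, (p - q) i ≠ 0 := by
      by_contra hcon; push_neg at hcon; exact hv (funext hcon)
    have hmem : (LinearMap.proj i : (Fin m → ℝ) →ₗ[ℝ] ℝ) ∈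
        LinearMap.ker (LinearMap.applyₗ (p - q)) := by rw [hker]; trivial
    have : (p - q) i = 0 := hmem
    exact hi this
  have hne := Subspace.biUnion_ne_univ_of_top_notMem htop
  rw [Set.ne_univ_iff_exists_notMem] at hne
  obtain ⟨g, hg⟩ := hne
  simp only [Set.mem_iUnion, not_exists, T, Finset.mem_image, Finset.mem_filter] at hg
  refine ⟨g, fun p hp q hq heq => ?_⟩
  by_contra hne'
  have := hg (LinearMap.ker (LinearMap.applyₗ (p - q)))
      ⟨(p, q), ⟨Finset.mem_product.mpr ⟨hp, hq⟩, hne'⟩, rfl⟩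
  apply this
  show g (p - q) = 0
  rw [map_sub, heq, sub_self]

private lemma face_has_vertex' {m : ℕ} {Q : Set (Fin m → ℝ)} {s : Finset (Fin m → ℝ)}
    (hQ : Q = convexHull ℝ (↑s : Set (Fin m → ℝ)))
    {f : (Fin m → ℝ) →ₗ[ℝ] ℝ} {c : ℝ} (hle : ∀ x ∈ Q, f x ≤ c)
    (hne : ({x ∈ Q | f x = c}).Nonempty) :
    ∃ v, v ∈ Q ∧ f v = c ∧ IsFace Q {v} := by
  classical
  obtain ⟨x₀, hx₀Q, hx₀f⟩ := hne
  have hsub : (↑s : Set (Fin m → ℝ)) ⊆ Q := hQ ▸ subset_convexHull ℝ _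
  have hles : ∀ p ∈ s, f p ≤ c := fun p hp => hle p (hsub hp)
  set s' : Finset (Fin m → ℝ) := s.filter (fun p => f p = c) with hs'def
  have hx₀' : x₀ ∈ convexHull ℝ (↑s' : Set (Fin m → ℝ)) :=
    mem_hull_filter' hles (hQ ▸ hx₀Q) hx₀f
  have hs'ne : s'.Nonempty := by
    by_contra hcon
    rw [Finset.not_nonempty_iff_eq_empty] at hcon
    rw [hcon] at hx₀'
    simp at hx₀'
  obtain ⟨g, hginj⟩ := exists_injOn_linear' s
  obtain ⟨p₀, hp₀s', hp₀max⟩ := s'.exists_max_image g hs'ne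
  have hp₀s : p₀ ∈ s := (Finset.mem_filter.mp hp₀s').1
  have hfp₀ : f p₀ = c := (Finset.mem_filter.mp hp₀s').2
  set t : Finset (Fin m → ℝ) := s.filter (fun p => f p < c) with htdef
  set ε : ℝ := if h : t.Nonempty then t.inf' h (fun p => (c - f p) / (1 + |g p - g p₀|)) else 1
    with hεdef
  have hεpos : 0 < ε := by
    rw [hεdef]
    split_ifs with h
    · rw [Finset.lt_inf'_iff]
      intro p hp
      have : f p < c := (Finset.mem_filter.mp hp).2
      exact div_pos (by linarith) (by positivity)
    · norm_num
  have hkey : ∀ p ∈ t, f p + ε * g p < c + ε * g p₀ := by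
    intro p hp
    have hfp : f p < c := (Finset.mem_filter.mp hp).2
    have h1 : ε ≤ (c - f p) / (1 + |g p - g p₀|) := by
      rw [hεdef]
      rw [dif_pos ⟨p, hp⟩]
      exact Finset.inf'_le _ hp
    have hden : (0:ℝ) < 1 + |g p - g p₀| := by positivity
    have h2 : ε * (1 + |g p - g p₀|) ≤ c - f p := by
      rw [← le_div_iff₀ hden]; exact h1
    have h3 : ε * (g p - g p₀) < c - f p := by
      calc ε * (g p - g p₀) ≤ ε * |g p - g p₀| := by
            exact mul_le_mul_of_nonneg_left (le_abs_self _) hεpos.le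
        _ < ε * (1 + |g p - g p₀|) := by nlinarith
        _ ≤ c - f p := h2
    nlinarith
  set h : (Fin m → ℝ) →ₗ[ℝ] ℝ := f + ε • g with hhdef
  set e : ℝ := c + ε * g p₀ with hedef
  have happ : ∀ x, h x = f x + ε * g x := fun x => rfl
  have hsle : ∀ p ∈ s, h p ≤ e := by
    intro p hp
    rcases lt_or_eq_of_le (hles p hp) with hlt | heq
    · exact (by rw [happ]; exact (hkey p (Finset.mem_filter.mpr ⟨hp, hlt⟩)).le)
    · rw [happ, heq, hedef]
      have : g p ≤ g p₀ := hp₀max p (Finset.mem_filter.mpr ⟨hp, heq⟩)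
      nlinarith
  have hfilt : s.filter (fun p => h p = e) = {p₀} := by
    ext p
    simp only [Finset.mem_filter, Finset.mem_singleton]
    constructor
    · rintro ⟨hps, hpe⟩
      rcases lt_or_eq_of_le (hles p hps) with hlt | heq
      · exact absurd hpe (ne_of_lt (by rw [happ]; exact hkey p (Finset.mem_filter.mpr ⟨hps, hlt⟩)))
      · rw [happ, heq, hedef] at hpe
        have hgp : g p = g p₀ := by
          have := add_left_cancel hpe
          exact mul_left_cancel₀ (ne_of_gt hεpos) this
        exact hginj hps (Finset.mem_coe.mpr hp₀s) hgp
    · rintro rfl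
      exact ⟨hp₀s, by rw [happ, hfp₀, hedef]⟩
  have hQle : ∀ x ∈ Q, h x ≤ e := by
    rw [hQ]; exact hull_le' hsle
  refine ⟨p₀, hsub hp₀s, hfp₀, Or.inr ⟨h, e, hQle, ?_⟩⟩
  apply Set.Subset.antisymm
  · rintro p rfl
    exact ⟨hsub hp₀s, by rw [happ, hfp₀, hedef]⟩
  · rintro x ⟨hxQ, hxe⟩
    have := mem_hull_filter' hsle (hQ ▸ hxQ) hxe
    rw [hfilt] at this
    simpa using this


/-- Let `Q` be a simple `(n+1)`-polytope whose exceptional facets `Q₁, …, Q_k` are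
pairwise disjoint and contain all vertices of `Q`.  Then `Q = ⋃ⱼ U(Q_j)`, where
`U(Q_j) = Q \ C(Q_j)` and `C(Q_j)` is the union of all faces of `Q` disjoint from
`Q_j`. -/
theorem cover_by_facet_neighborhoods
    {n k : ℕ} (Q : Set (Fin (n + 1) → ℝ)) (hQ : IsPolytope Q)
    (hdim : pdim Q = n + 1) (hsimple : IsSimple Q)
    (Qe : Fin k → Set (Fin (n + 1) → ℝ)) (hQe : ∀ j, IsFacet Q (Qe j))
    (hdisj : ∀ j j', j ≠ j' → Qe j ∩ Qe j' = ∅)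
    (hvert : ∀ v, IsVertex Q v → ∃ j, v ∈ Qe j) :
    Q = ⋃ j, (Q \ ⋃₀ {F | IsFace Q F ∧ F ∩ Qe j = ∅}) := by
  classical
  obtain ⟨s, hs⟩ := hQ
  apply Set.Subset.antisymm
  · intro x hx
    by_contra hcon
    simp only [Set.mem_iUnion, Set.mem_diff, not_exists, not_and, not_not] at hcon
    have hC : ∀ j, ∃ F, IsFace Q F ∧ F ∩ Qe j = ∅ ∧ x ∈ F := by
      intro j
      have := hcon j hx
      obtain ⟨F, hF, hxF⟩ := this
      exact ⟨F, hF.1, hF.2, hxF⟩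
    have hQeQ : ∀ j, Qe j ⊆ Q ∧ (Qe j).Nonempty := by
      intro j
      obtain ⟨hface, hne, -⟩ := hQe j
      refine ⟨?_, hne⟩
      rcases hface with heq | ⟨f, c, -, heq⟩
      · rw [heq]
      · rw [heq]; exact fun y hy => hy.1
    have hrep : ∀ j : Fin k, ∃ p : ((Fin (n+1) → ℝ) →ₗ[ℝ] ℝ) × ℝ,
        (∀ y ∈ Q, p.1 y ≤ p.2) ∧ p.1 x = p.2 ∧ {y ∈ Q | p.1 y = p.2} ∩ Qe j = ∅ := by
      intro j
      obtain ⟨F, hFface, hFdisj, hxF⟩ := hC j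
      rcases hFface with rfl | ⟨f, c, hle, rfl⟩
      · obtain ⟨y, hy⟩ := (hQeQ j).2
        exact absurd hFdisj (by
          apply Set.Nonempty.ne_empty
          exact ⟨y, (hQeQ j).1 hy, hy⟩)
      · exact ⟨(f, c), hle, hxF.2, hFdisj⟩
    choose p hp1 hp2 hp3 using hrep
    set g : (Fin (n+1) → ℝ) →ₗ[ℝ] ℝ := ∑ j : Fin k, (p j).1 with hgdef
    set d : ℝ := ∑ j : Fin k, (p j).2 with hddef
    have hgapp : ∀ y, g y = ∑ j : Fin k, (p j).1 y := by
      intro y; rw [hgdef]; simp [LinearMap.sum_apply]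
    have hgle : ∀ y ∈ Q, g y ≤ d := by
      intro y hy
      rw [hgapp, hddef]
      exact Finset.sum_le_sum (fun j _ => hp1 j y hy)
    have hgx : g x = d := by
      rw [hgapp, hddef]
      exact Finset.sum_congr rfl (fun j _ => hp2 j)
    obtain ⟨v, hvQ, hvg, hvface⟩ := face_has_vertex' hs hgle ⟨x, hx, hgx⟩
    obtain ⟨j, hvj⟩ := hvert v hvface
    have heach : ∀ j' : Fin k, (p j').1 v = (p j').2 := by
      have hsum : ∑ j' : Fin k, (p j').1 v = ∑ j' : Fin k, (p j').2 := by
        rw [← hgapp, hvg, hddef]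
      exact fun j' => (Finset.sum_eq_sum_iff_of_le
        (fun i _ => hp1 i v hvQ)).mp hsum j' (Finset.mem_univ j')
    have : v ∈ ({y ∈ Q | (p j).1 y = (p j).2} : Set _) ∩ Qe j := ⟨⟨hvQ, heach j⟩, hvj⟩
    rw [hp3 j] at this
    exact this
  · intro x hx
    obtain ⟨_, ⟨j, rfl⟩, hxj, -⟩ := hx
    exact hxj
end

section
/- Let Q be a simple (n+1)-polytope with pairwise disjoint exceptional facets Q₁, …, Q_k containing all vertices of Q, λ an isotropy function, and W(Q,λ) = (𝕋ⁿ × Q)/∼_b. Then for each j, the subspace π⁻¹(Q_j) ⊆ W(Q,λ) is homeomorphic to the quasitoric orbifold space (𝕋ⁿ × Q_j)/∼ of the characteristic model (Q_j, ξʲ), where ξʲ is the restriction of λ to the facets of Q_j. -/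
open Set

variable {V : Type*} [AddCommGroup V] [Module ℝ V]

/-- The standard lattice `ℤⁿ ⊆ ℝⁿ`. -/
def stdLattice (n : ℕ) : AddSubgroup (Fin n → ℝ) :=
  ((Int.castAddHom ℝ).compLeft (Fin n)).range

/-- The `n`-torus `𝕋ⁿ = ℝⁿ/ℤⁿ`. -/
abbrev Torus (n : ℕ) := (Fin n → ℝ) ⧸ stdLattice n

/-- The subgroup `Im(f_{F(x)}) ⊆ 𝕋ⁿ` attached to a point `x`: the image in `𝕋ⁿ` of
the real span of the isotropy vectors `λ(Fᵢ)` of the (non-exceptional) facets `Fᵢ`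
containing `x` (these are exactly the ones containing the face having `x` in its
relative interior). -/
def subTorusOf {N n m : ℕ} (F : Fin m → Set (Fin N → ℝ)) (lam : Fin m → (Fin n → ℤ))
    (x : Fin N → ℝ) : AddSubgroup (Torus n) :=
  AddSubgroup.map (QuotientAddGroup.mk' (stdLattice n))
    (Submodule.span ℝ
      {w | ∃ i, x ∈ F i ∧ w = fun j => ((lam i j : ℝ))}).toAddSubgroup

/-- The identification `(t, x) ∼_b (u, y) ⟺ x = y ∧ t - u ∈ Im(f_{F(x)})` on
`𝕋ⁿ × S`, for a subset `S` of the ambient space. -/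
def bSetoid {N n m : ℕ} (S : Set (Fin N → ℝ)) (F : Fin m → Set (Fin N → ℝ))
    (lam : Fin m → (Fin n → ℤ)) : Setoid (Torus n × S) where
  r a b := (a.2 : Fin N → ℝ) = (b.2 : Fin N → ℝ) ∧
    a.1 - b.1 ∈ subTorusOf F lam (a.2 : Fin N → ℝ)
  iseqv := by
    refine ⟨fun a => ⟨rfl, by simpa using (subTorusOf F lam _).zero_mem⟩, ?_, ?_⟩
    · rintro a b ⟨h1, h2⟩
      refine ⟨h1.symm, ?_⟩
      rw [← h1]
      simpa using (subTorusOf F lam _).neg_mem h2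
    · rintro a b c ⟨h1, h2⟩ ⟨h3, h4⟩
      refine ⟨h1.trans h3, ?_⟩
      have : a.1 - c.1 = (a.1 - b.1) + (b.1 - c.1) := by abel
      rw [this]
      exact (subTorusOf F lam _).add_mem h2 (by rw [h1]; exact h4)

/-- The space `W(Q, λ) = (𝕋ⁿ × Q)/∼_b` (and likewise the quasitoric orbifold model
`(𝕋ⁿ × Q_j)/∼` when applied to a facet `Q_j`). -/
def BSpace {N n m : ℕ} (S : Set (Fin N → ℝ)) (F : Fin m → Set (Fin N → ℝ))
    (lam : Fin m → (Fin n → ℤ)) := Quotient (bSetoid S F lam)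

instance {N n m : ℕ} (S : Set (Fin N → ℝ)) (F : Fin m → Set (Fin N → ℝ))
    (lam : Fin m → (Fin n → ℤ)) : TopologicalSpace (BSpace S F lam) :=
  inferInstanceAs (TopologicalSpace (Quotient (bSetoid S F lam)))

/-- The projection `π : W(Q, λ) → Q`, `[t, x] ↦ x`. -/
def bProj {N n m : ℕ} (S : Set (Fin N → ℝ)) (F : Fin m → Set (Fin N → ℝ))
    (lam : Fin m → (Fin n → ℤ)) : BSpace S F lam → (Fin N → ℝ) :=
  Quotient.lift (fun p => (p.2 : Fin N → ℝ)) (fun _ _ h => h.1)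

section Aux

lemma IsFace.subset_poly {P G : Set V} (h : IsFace P G) : G ⊆ P := by
  rcases h with rfl | ⟨f, c, _, rfl⟩
  · exact subset_rfl
  · exact fun x hx => hx.1

lemma IsPolytope.isClosed' {N : ℕ} {P : Set (Fin N → ℝ)} (h : IsPolytope P) :
    IsClosed P := by
  rcases h with ⟨s, rfl⟩
  exact (s.finite_toSet.isCompact_convexHull (𝕜 := ℝ)).isClosed

lemma IsFace.isClosed' {N : ℕ} {P G : Set (Fin N → ℝ)} (hP : IsClosed P)
    (h : IsFace P G) : IsClosed G := by
  rcases h with rfl | ⟨f, c, _, rfl⟩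
  · exact hP
  · have hf : Continuous f := f.continuous_of_finiteDimensional
    have : {x ∈ P | f x = c} = P ∩ f ⁻¹' {c} := rfl
    rw [this]
    exact hP.inter (isClosed_singleton.preimage hf)

end Aux

/-- Let `Q` be a simple `(n+1)`-polytope with pairwise disjoint exceptional facets
`Q₁, …, Q_k` containing all vertices of `Q`, and `λ` an isotropy function on the
remaining facets `F₁, …, F_m`.  Then for each `j`, the subspace
`π⁻¹(Q_j) ⊆ W(Q, λ) = (𝕋ⁿ × Q)/∼_b` is homeomorphic to the quasitoric orbifold
space `(𝕋ⁿ × Q_j)/∼` of the characteristic model `(Q_j, ξʲ)`, where `ξʲ` is the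
restriction of `λ` to the facets of `Q_j` (i.e. `ξʲ(Q_j ∩ Fᵢ) = λ(Fᵢ)`). -/
theorem preimage_of_exceptional_facet_homeo_model
    {n k m : ℕ} (Q : Set (Fin (n + 1) → ℝ)) (hQ : IsPolytope Q)
    (hdim : pdim Q = n + 1) (hsimple : IsSimple Q)
    (Qe : Fin k → Set (Fin (n + 1) → ℝ)) (hQe : ∀ j, IsFacet Q (Qe j))
    (hdisj : ∀ j j', j ≠ j' → Qe j ∩ Qe j' = ∅)
    (hvert : ∀ v, IsVertex Q v → ∃ j, v ∈ Qe j)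
    (F : Fin m → Set (Fin (n + 1) → ℝ)) (hF : ∀ i, IsFacet Q (F i))
    (hall : {G | IsFacet Q G} = Set.range Qe ∪ Set.range F)
    (lam : Fin m → (Fin n → ℤ))
    (hlam : ∀ I : Set (Fin m), (⋂ i ∈ I, F i).Nonempty →
      LinearIndependent ℤ (fun i : I => lam i))
    (j : Fin k) :
    Nonempty ((bProj Q F lam ⁻¹' Qe j : Set (BSpace Q F lam)) ≃ₜ
      BSpace (Qe j) F lam) := by
  classical
  have hsub : Qe j ⊆ Q := (hQe j).1.subset_poly
  have hQclosed : IsClosed Q := hQ.isClosed'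
  have hQejClosed : IsClosed (Qe j) := (hQe j).1.isClosed' hQclosed
  set sQ := bSetoid Q F lam with hsQdef
  set sE := bSetoid (Qe j) F lam with hsEdef
  -- the inclusion on pairs
  let ι : Torus n × (Qe j) → Torus n × Q :=
    fun p => (p.1, ⟨(p.2 : Fin (n + 1) → ℝ), hsub p.2.2⟩)
  have hι : Continuous ι :=
    continuous_fst.prodMk ((continuous_subtype_val.comp continuous_snd).subtype_mk _)
  have hcompat : ∀ a b : Torus n × (Qe j), sE.r a b → sQ.r (ι a) (ι b) := fun a b h => h
  let bwd0 : BSpace (Qe j) F lam → BSpace Q F lam :=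
    Quotient.lift (fun p => Quotient.mk sQ (ι p))
      (fun a b h => Quotient.sound (hcompat a b h))
  have hmem : ∀ z, bwd0 z ∈ bProj Q F lam ⁻¹' Qe j := by
    intro z
    obtain ⟨p, rfl⟩ := Quotient.exists_rep z
    exact p.2.2
  let bwd : BSpace (Qe j) F lam → (bProj Q F lam ⁻¹' Qe j : Set (BSpace Q F lam)) :=
    fun z => ⟨bwd0 z, hmem z⟩
  have hbwd0c : Continuous bwd0 := by
    refine Continuous.quotient_lift ?_ _
    exact continuous_quot_mk.comp hι
  have hbwdc : Continuous bwd := hbwd0c.subtype_mk _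
  have hinj : Function.Injective bwd := by
    intro a b hab
    obtain ⟨p, rfl⟩ := Quotient.exists_rep a
    obtain ⟨q, rfl⟩ := Quotient.exists_rep b
    have h1 : Quotient.mk sQ (ι p) = Quotient.mk sQ (ι q) := congrArg Subtype.val hab
    have h2 : sQ.r (ι p) (ι q) := Quotient.exact h1
    exact Quotient.sound h2
  have hsurj : Function.Surjective bwd := by
    rintro ⟨z, hz⟩
    obtain ⟨p, rfl⟩ := Quotient.exists_rep z
    have hz' : (p.2 : Fin (n + 1) → ℝ) ∈ Qe j := hz
    refine ⟨Quotient.mk sE (p.1, ⟨(p.2 : Fin (n + 1) → ℝ), hz'⟩), ?_⟩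
    apply Subtype.ext
    show Quotient.mk sQ (ι (p.1, ⟨(p.2 : Fin (n + 1) → ℝ), hz'⟩)) = Quotient.mk sQ p
    exact congrArg (Quotient.mk sQ) (Prod.ext rfl (Subtype.ext rfl))
  let e : BSpace (Qe j) F lam ≃ (bProj Q F lam ⁻¹' Qe j : Set (BSpace Q F lam)) :=
    Equiv.ofBijective bwd ⟨hinj, hsurj⟩
  have hsymm : Continuous
      (e.symm : (bProj Q F lam ⁻¹' Qe j : Set (BSpace Q F lam)) → BSpace (Qe j) F lam) := by
    rw [continuous_iff_isClosed]
    intro C hC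
    -- the saturated closed set downstairs
    set D' : Set (Torus n × (Fin (n + 1) → ℝ)) :=
      (Prod.map id (Subtype.val : Qe j → (Fin (n + 1) → ℝ))) '' (Quotient.mk sE ⁻¹' C)
      with hD'def
    set D : Set (Torus n × Q) :=
      (fun p : Torus n × Q => (p.1, (p.2 : Fin (n + 1) → ℝ))) ⁻¹' D' with hDdef
    have hvalCE : Topology.IsClosedEmbedding (Subtype.val : Qe j → (Fin (n + 1) → ℝ)) :=
      Topology.IsClosedEmbedding.subtypeVal hQejClosed
    have hpreC : IsClosed (Quotient.mk sE ⁻¹' C) := hC.preimage continuous_quot_mk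
    have hD' : IsClosed D' :=
      (isProperMap_id.prodMap hvalCE.isProperMap).isClosedMap _ hpreC
    have hD : IsClosed D :=
      hD'.preimage (continuous_fst.prodMk (continuous_subtype_val.comp continuous_snd))
    have hsat : Quotient.mk sQ ⁻¹' (Quotient.mk sQ '' D) = D := by
      apply Set.Subset.antisymm
      · rintro p hp
        obtain ⟨d, hdD, hdp⟩ := hp
        obtain ⟨hx, ht⟩ : sQ.r d p := Quotient.exact hdp
        obtain ⟨a, haC, hae⟩ := hdD
        have ha1 : a.1 = d.1 := congrArg Prod.fst hae
        have ha2 : (a.2 : Fin (n + 1) → ℝ) = (d.2 : Fin (n + 1) → ℝ) :=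
          congrArg Prod.snd hae
        have hpmem : (p.2 : Fin (n + 1) → ℝ) ∈ Qe j := by
          rw [← hx, ← ha2]; exact a.2.2
        refine ⟨(p.1, ⟨(p.2 : Fin (n + 1) → ℝ), hpmem⟩), ?_, rfl⟩
        have hrel : sE.r a (p.1, ⟨(p.2 : Fin (n + 1) → ℝ), hpmem⟩) := by
          constructor
          · exact ha2.trans hx
          · show a.1 - p.1 ∈ subTorusOf F lam (a.2 : Fin (n + 1) → ℝ)
            rw [ha2, ha1]
            exact ht
        have : Quotient.mk sE (p.1, ⟨(p.2 : Fin (n + 1) → ℝ), hpmem⟩) = Quotient.mk sE a :=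
          (Quotient.sound hrel).symm
        show Quotient.mk sE _ ∈ C
        rw [this]
        exact haC
      · exact Set.subset_preimage_image _ _
    have himgC : IsClosed (Quotient.mk sQ '' D) := by
      have hqm : Topology.IsQuotientMap (Quotient.mk sQ) := isQuotientMap_quot_mk
      rw [← hqm.isClosed_preimage, hsat]
      exact hD
    have hset : e.symm ⁻¹' C =
        Subtype.val ⁻¹' (Quotient.mk sQ '' D) := by
      rw [← Equiv.image_eq_preimage_symm]
      ext s
      constructor
      · rintro ⟨z, hzC, rfl⟩
        obtain ⟨p, rfl⟩ := Quotient.exists_rep z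
        exact ⟨ι p, ⟨p, hzC, rfl⟩, rfl⟩
      · rintro ⟨d, ⟨a, haC, hae⟩, hds⟩
        have ha1 : a.1 = d.1 := congrArg Prod.fst hae
        have ha2 : (a.2 : Fin (n + 1) → ℝ) = (d.2 : Fin (n + 1) → ℝ) :=
          congrArg Prod.snd hae
        refine ⟨Quotient.mk sE a, haC, ?_⟩
        apply Subtype.ext
        show Quotient.mk sQ (ι a) = (s : BSpace Q F lam)
        rw [← hds]
        congr 1
        exact Prod.ext ha1 (Subtype.ext ha2)
    rw [hset]
    exact himgC.preimage continuous_subtype_val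
  exact ⟨(Homeomorph.mk e hbwdc hsymm).symm⟩
end
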